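/- With F as in the graph total-variation setting (F(x) = f(x) + Σ_v g_v(x_v) + Σ_{(u,v)∈E} w_{(u,v)}|x_u − x_v|, f differentiable, each g_v directionally differentiable, w ≥ 0), for every x ∈ dom F and d ∈ ℝ^V one has F'(x, d) = F'(x, min(d,0)) + F'(x, max(d,0)), where min(d,0) and max(d,0) denote coordinatewise minimum and maximum with 0. -/

import Mathlib

open Filter Set Finset

def HasDirDeriv {Ω : Type*} [AddCommGroup Ω] [Module ℝ Ω]
    (h : Ω → EReal) (x d : Ω) (L : EReal) : Prop :=
  Tendsto (fun t : ℝ => ((t⁻¹ : ℝ) : EReal) * (h (x + t • d) - h x))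
    (nhdsWithin 0 (Set.Ioi 0)) (nhds L)

variable {V : Type*} [Fintype V] [DecidableEq V]

/-- The objective `F = f + Σ_v g_v + graph total variation`. -/
noncomputable def objF (E : Finset (V × V)) (w : V × V → ℝ)
    (f : (V → ℝ) → ℝ) (g : V → ℝ → EReal) (x : V → ℝ) : EReal :=
  ((f x : ℝ) : EReal) + ∑ v, g v (x v) +
    ((∑ e ∈ E, w e * |x e.1 - x e.2| : ℝ) : EReal)

/-- `δ⁺_v(x) = ∇_v f(x) + g_v'(x_v, +1) + Σ_{e ∋ v} w_e sign(x_v − x_u)`. -/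
noncomputable def deltaPlus (E : Finset (V × V)) (w : V × V → ℝ)
    (f : (V → ℝ) → ℝ) (gd : V → ℝ → ℝ → EReal) (x : V → ℝ) (v : V) : EReal :=
  ((fderiv ℝ f x (Pi.single v 1) : ℝ) : EReal) + gd v (x v) 1 +
    ((∑ e ∈ E.filter (fun e => e.1 = v ∨ e.2 = v),
        w e * Real.sign (x v - x (if e.1 = v then e.2 else e.1)) : ℝ) : EReal)

/-- `δ⁻_v(x) = ∇_v f(x) − g_v'(x_v, −1) + Σ_{e ∋ v} w_e sign(x_v − x_u)`. -/
noncomputable def deltaMinus (E : Finset (V × V)) (w : V × V → ℝ)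
    (f : (V → ℝ) → ℝ) (gd : V → ℝ → ℝ → EReal) (x : V → ℝ) (v : V) : EReal :=
  ((fderiv ℝ f x (Pi.single v 1) : ℝ) : EReal) - gd v (x v) (-1) +
    ((∑ e ∈ E.filter (fun e => e.1 = v ∨ e.2 = v),
        w e * Real.sign (x v - x (if e.1 = v then e.2 else e.1)) : ℝ) : EReal)

/-- The value of the directional derivative of `F` at `x` in direction `d`. -/
noncomputable def dirDerivVal (E : Finset (V × V)) (w : V × V → ℝ)
    (f : (V → ℝ) → ℝ) (gd : V → ℝ → ℝ → EReal) (x d : V → ℝ) : EReal :=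
  (∑ v ∈ univ.filter (fun v => 0 < d v),
      ((d v : ℝ) : EReal) * deltaPlus E w f gd x v) +
  (∑ v ∈ univ.filter (fun v => d v < 0),
      ((d v : ℝ) : EReal) * deltaMinus E w f gd x v) +
  ((∑ e ∈ E.filter (fun e => x e.1 = x e.2), w e * |d e.1 - d e.2| : ℝ) : EReal)

section AuxStmt9

set_option linter.unusedSectionVars false
set_option maxHeartbeats 1000000

lemma key_abs_stmt9 (a b : ℝ) : |a - b| = |min a 0 - min b 0| + |max a 0 - max b 0| := by
  have ha := min_add_max a (0:ℝ)
  have hb := min_add_max b (0:ℝ)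
  rcases le_total a b with h | h
  · rw [abs_of_nonpos (by linarith),
      abs_of_nonpos (sub_nonpos.2 (min_le_min h le_rfl)),
      abs_of_nonpos (sub_nonpos.2 (max_le_max h le_rfl))]
    linarith
  · rw [abs_of_nonneg (by linarith),
      abs_of_nonneg (sub_nonneg.2 (min_le_min h le_rfl)),
      abs_of_nonneg (sub_nonneg.2 (max_le_max h le_rfl))]
    linarith

lemma abs_shift_stmt9 {A B : ℝ} (h : |B| < |A|) : |A + B| = |A| + Real.sign A * B := by
  obtain ⟨h1, h2⟩ := abs_lt.1 h
  rcases lt_trichotomy A 0 with hA | hA | hA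
  · rw [Real.sign_of_neg hA, abs_of_neg hA] at *
    rw [abs_of_neg (by linarith)]; ring
  · subst hA
    simp only [abs_zero] at h
    have : (0:ℝ) ≤ |B| := abs_nonneg B
    linarith
  · rw [Real.sign_of_pos hA, abs_of_pos hA] at *
    rw [abs_of_pos (by linarith)]; ring

lemma etendsto_add_stmt9 {α : Type*} {l : Filter α} {f g : α → EReal} {a b : EReal}
    (ha : a ≠ ⊥) (hb : b ≠ ⊥) (hf : Tendsto f l (nhds a)) (hg : Tendsto g l (nhds b)) :
    Tendsto (fun x => f x + g x) l (nhds (a + b)) :=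
  (EReal.continuousAt_add (p := (a, b)) (Or.inr hb) (Or.inl ha)).tendsto.comp
    (hf.prodMk_nhds hg)

lemma esum_ne_bot_stmt9 {ι : Type*} (s : Finset ι) (f : ι → EReal)
    (h : ∀ i ∈ s, f i ≠ ⊥) : ∑ i ∈ s, f i ≠ ⊥ := by
  induction s using Finset.cons_induction with
  | empty => simp
  | cons i s hi ih =>
    rw [Finset.sum_cons, Ne, EReal.add_eq_bot_iff]
    push_neg
    exact ⟨h i (Finset.mem_cons_self i s), ih fun j hj => h j (Finset.mem_cons_of_mem hj)⟩

lemma etendsto_sum_stmt9 {ι α : Type*} {l : Filter α} (s : Finset ι) (f : ι → α → EReal)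
    (a : ι → EReal) (ha : ∀ i ∈ s, a i ≠ ⊥) (hf : ∀ i ∈ s, Tendsto (f i) l (nhds (a i))) :
    Tendsto (fun x => ∑ i ∈ s, f i x) l (nhds (∑ i ∈ s, a i)) := by
  induction s using Finset.cons_induction with
  | empty => simpa using tendsto_const_nhds
  | cons i s hi ih =>
    simp only [Finset.sum_cons]
    exact etendsto_add_stmt9 (ha i (Finset.mem_cons_self i s))
      (esum_ne_bot_stmt9 s a fun j hj => ha j (Finset.mem_cons_of_mem hj))
      (hf i (Finset.mem_cons_self i s))
      (ih (fun j hj => ha j (Finset.mem_cons_of_mem hj))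
        (fun j hj => hf j (Finset.mem_cons_of_mem hj)))

lemma pos_mul_add_stmt9 {r : ℝ} (hr : 0 < r) (a b : EReal) :
    (r : EReal) * (a + b) = (r : EReal) * a + (r : EReal) * b := by
  induction a using EReal.rec with
  | bot => simp [EReal.coe_mul_bot_of_pos hr]
  | top =>
    induction b using EReal.rec with
    | bot => simp [EReal.coe_mul_bot_of_pos hr]
    | coe y =>
      rw [EReal.top_add_coe, EReal.coe_mul_top_of_pos hr, ← EReal.coe_mul, EReal.top_add_coe]
    | top => rw [EReal.top_add_top, EReal.coe_mul_top_of_pos hr, EReal.top_add_top]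
  | coe x =>
    induction b using EReal.rec with
    | bot => simp [EReal.coe_mul_bot_of_pos hr]
    | coe y => rw [← EReal.coe_add, ← EReal.coe_mul, mul_add, EReal.coe_add,
        EReal.coe_mul, EReal.coe_mul]
    | top => rw [EReal.coe_add_top, EReal.coe_mul_top_of_pos hr, ← EReal.coe_mul,
        EReal.coe_add_top]

lemma pos_mul_sum_stmt9 {r : ℝ} (hr : 0 < r) {ι : Type*} (s : Finset ι) (f : ι → EReal) :
    (r : EReal) * (∑ i ∈ s, f i) = ∑ i ∈ s, (r : EReal) * f i := by
  induction s using Finset.cons_induction with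
  | empty => simp
  | cons i s hi ih => rw [Finset.sum_cons, Finset.sum_cons, pos_mul_add_stmt9 hr, ih]

lemma coe_sum_stmt9 {ι : Type*} (s : Finset ι) (f : ι → ℝ) :
    ((∑ i ∈ s, f i : ℝ) : EReal) = ∑ i ∈ s, ((f i : ℝ) : EReal) := by
  induction s using Finset.cons_induction with
  | empty => simp
  | cons i s hi ih => rw [Finset.sum_cons, Finset.sum_cons, EReal.coe_add, ih]

lemma fpart_stmt9 (f : (V → ℝ) → ℝ) (hf : Differentiable ℝ f) (x c : V → ℝ) :
    Tendsto (fun t : ℝ => t⁻¹ * (f (x + t • c) - f x)) (nhdsWithin 0 (Set.Ioi 0))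
      (nhds (fderiv ℝ f x c)) := by
  have hline : HasDerivAt (fun t : ℝ => x + t • c) c 0 := by
    simpa using ((hasDerivAt_id (0:ℝ)).smul_const c).const_add x
  have hcomp : HasDerivAt (fun t : ℝ => f (x + t • c)) (fderiv ℝ f x c) 0 := by
    have h2 := (hf (x + (0:ℝ) • c)).hasFDerivAt.comp_hasDerivAt 0 hline
    rw [zero_smul, add_zero] at h2
    exact h2
  have h3 := hasDerivAt_iff_tendsto_slope.1 hcomp
  have h4 : Tendsto (slope (fun t : ℝ => f (x + t • c)) 0) (nhdsWithin 0 (Set.Ioi 0))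
      (nhds (fderiv ℝ f x c)) :=
    h3.mono_left (nhdsWithin_mono 0 (fun t ht => ne_of_gt ht))
  refine h4.congr (fun t => ?_)
  simp [slope_def_field, div_eq_inv_mul]

/-- Slope value of the TV part. -/
noncomputable def Sval (E : Finset (V × V)) (w : V × V → ℝ) (x c : V → ℝ) : ℝ :=
  ∑ e ∈ E, w e * (if x e.1 = x e.2 then |c e.1 - c e.2|
    else Real.sign (x e.1 - x e.2) * (c e.1 - c e.2))

/-- Value of the directional derivative. -/
noncomputable def Lval (E : Finset (V × V)) (w : V × V → ℝ) (f : (V → ℝ) → ℝ)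
    (gd : V → ℝ → ℝ → EReal) (x c : V → ℝ) : EReal :=
  ((fderiv ℝ f x c + Sval E w x c : ℝ) : EReal) + ∑ v, gd v (x v) (c v)

lemma tvpart_stmt9 (E : Finset (V × V)) (w : V × V → ℝ) (x c : V → ℝ) :
    ∀ᶠ t in nhdsWithin (0:ℝ) (Set.Ioi 0),
      (∑ e ∈ E, w e * |(x + t • c) e.1 - (x + t • c) e.2|) -
        (∑ e ∈ E, w e * |x e.1 - x e.2|) = t * Sval E w x c := by
  have hsmall : ∀ᶠ t in nhdsWithin (0:ℝ) (Set.Ioi 0), ∀ e ∈ E,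
      x e.1 ≠ x e.2 → |t * (c e.1 - c e.2)| < |x e.1 - x e.2| := by
    rw [eventually_all_finset]
    intro e _
    by_cases he : x e.1 = x e.2
    · exact Eventually.of_forall (fun t h => absurd he h)
    · have hpos : 0 < |x e.1 - x e.2| := abs_pos.2 (sub_ne_zero.2 he)
      have hc : Tendsto (fun t : ℝ => |t * (c e.1 - c e.2)|) (nhdsWithin 0 (Set.Ioi 0))
          (nhds 0) := by
        have h0 : Tendsto (fun t : ℝ => |t * (c e.1 - c e.2)|) (nhds 0)
            (nhds |0 * (c e.1 - c e.2)|) :=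
          ((continuous_id.mul continuous_const).abs).tendsto 0
        simpa using h0.mono_left nhdsWithin_le_nhds
      filter_upwards [hc.eventually_lt_const hpos] with t ht _ using ht
  filter_upwards [hsmall, self_mem_nhdsWithin] with t ht htpos
  rw [← Finset.sum_sub_distrib, Sval, Finset.mul_sum]
  refine Finset.sum_congr rfl (fun e he => ?_)
  simp only [Pi.add_apply, Pi.smul_apply, smul_eq_mul]
  have harr : x e.1 + t * c e.1 - (x e.2 + t * c e.2)
      = (x e.1 - x e.2) + t * (c e.1 - c e.2) := by ring
  by_cases hxe : x e.1 = x e.2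
  · rw [harr, if_pos hxe, hxe]
    simp only [sub_self, zero_add, abs_zero]
    rw [abs_mul, abs_of_pos htpos]
    ring
  · rw [harr, if_neg hxe, abs_shift_stmt9 (ht e he hxe)]
    ring

lemma mainLim_stmt9 (E : Finset (V × V)) (w : V × V → ℝ)
    (f : (V → ℝ) → ℝ) (hf : Differentiable ℝ f)
    (g : V → ℝ → EReal) (hgbot : ∀ v y, g v y ≠ ⊥)
    (gd : V → ℝ → ℝ → EReal)
    (hgd : ∀ v y, g v y ≠ ⊤ → ∀ dir : ℝ,
      HasDirDeriv (g v) y dir (gd v y dir) ∧ gd v y dir ≠ ⊥)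
    (x : V → ℝ) (hgtop : ∀ v, g v (x v) ≠ ⊤) (c : V → ℝ) :
    HasDirDeriv (objF E w f g) x c (Lval E w f gd x c) := by
  set γ : V → ℝ := fun v => (g v (x v)).toReal with hγdef
  have hγ : ∀ v, ((γ v : ℝ) : EReal) = g v (x v) :=
    fun v => EReal.coe_toReal (hgtop v) (hgbot v (x v))
  have key : ∀ᶠ t in nhdsWithin (0:ℝ) (Set.Ioi 0),
      ((t⁻¹ : ℝ) : EReal) * (objF E w f g (x + t • c) - objF E w f g x)
        = ((t⁻¹ * ((f (x + t • c) - f x) +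
            ((∑ e ∈ E, w e * |(x + t • c) e.1 - (x + t • c) e.2|) -
             (∑ e ∈ E, w e * |x e.1 - x e.2|))) : ℝ) : EReal)
          + ∑ v : V, ((t⁻¹ : ℝ) : EReal) * (g v (x v + t * c v) - g v (x v)) := by
    filter_upwards [self_mem_nhdsWithin] with t htpos
    have ht : (0:ℝ) < t := htpos
    have hti : (0:ℝ) < t⁻¹ := inv_pos.2 ht
    have hsum0 : ∑ v : V, g v (x v) = ((∑ v : V, γ v : ℝ) : EReal) := by
      rw [coe_sum_stmt9]
      exact Finset.sum_congr rfl fun v _ => (hγ v).symm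
    have hobjx : objF E w f g x
        = ((f x + (∑ v : V, γ v) + (∑ e ∈ E, w e * |x e.1 - x e.2|) : ℝ) : EReal) := by
      rw [objF, hsum0, EReal.coe_add, EReal.coe_add]
    have hRHSsum : ∑ v : V, ((t⁻¹:ℝ) : EReal) * (g v (x v + t * c v) - g v (x v))
        = (∑ v : V, ((t⁻¹:ℝ):EReal) * g v (x v + t * c v))
          + ((∑ v : V, t⁻¹ * (-γ v) : ℝ) : EReal) := by
      rw [coe_sum_stmt9, ← Finset.sum_add_distrib]
      refine Finset.sum_congr rfl fun v _ => ?_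
      rw [← hγ v, sub_eq_add_neg, ← EReal.coe_neg, pos_mul_add_stmt9 hti, EReal.coe_mul]
    rw [hRHSsum, hobjx, sub_eq_add_neg, ← EReal.coe_neg]
    simp only [objF, Pi.add_apply, Pi.smul_apply, smul_eq_mul]
    rw [pos_mul_add_stmt9 hti, pos_mul_add_stmt9 hti, pos_mul_add_stmt9 hti,
      pos_mul_sum_stmt9 hti, ← EReal.coe_mul, ← EReal.coe_mul, ← EReal.coe_mul]
    have hd : t⁻¹ * ((f (x + t • c) - f x) +
          ((∑ e ∈ E, w e * |(x + t • c) e.1 - (x + t • c) e.2|) -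
           (∑ e ∈ E, w e * |x e.1 - x e.2|)))
        + (∑ v : V, t⁻¹ * (-γ v))
        = t⁻¹ * f (x + t • c)
          + t⁻¹ * (∑ e ∈ E, w e * |(x + t • c) e.1 - (x + t • c) e.2|)
          + t⁻¹ * (-(f x + (∑ v : V, γ v) + (∑ e ∈ E, w e * |x e.1 - x e.2|))) := by
      rw [← Finset.mul_sum, Finset.sum_neg_distrib]
      ring
    calc ((t⁻¹ * f (x + t • c) : ℝ) : EReal)
          + (∑ v : V, ((t⁻¹:ℝ):EReal) * g v (x v + t * c v))
          + ((t⁻¹ * (∑ e ∈ E, w e * |(x + t • c) e.1 - (x + t • c) e.2|) : ℝ) : EReal)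
          + ((t⁻¹ * (-(f x + (∑ v : V, γ v) + (∑ e ∈ E, w e * |x e.1 - x e.2|))) : ℝ) : EReal)
        = (∑ v : V, ((t⁻¹:ℝ):EReal) * g v (x v + t * c v))
          + ((t⁻¹ * f (x + t • c)
            + t⁻¹ * (∑ e ∈ E, w e * |(x + t • c) e.1 - (x + t • c) e.2|)
            + t⁻¹ * (-(f x + (∑ v : V, γ v) + (∑ e ∈ E, w e * |x e.1 - x e.2|))) : ℝ) : EReal) := by
          rw [EReal.coe_add, EReal.coe_add]; abel
      _ = ((t⁻¹ * ((f (x + t • c) - f x) +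
            ((∑ e ∈ E, w e * |(x + t • c) e.1 - (x + t • c) e.2|) -
             (∑ e ∈ E, w e * |x e.1 - x e.2|))) : ℝ) : EReal)
          + ((∑ v : V, ((t⁻¹:ℝ):EReal) * g v (x v + t * c v))
            + ((∑ v : V, t⁻¹ * (-γ v) : ℝ) : EReal)) := by
          rw [← hd, EReal.coe_add]; abel
  have htv : Tendsto (fun t : ℝ => t⁻¹ *
      ((∑ e ∈ E, w e * |(x + t • c) e.1 - (x + t • c) e.2|) -
       (∑ e ∈ E, w e * |x e.1 - x e.2|))) (nhdsWithin 0 (Set.Ioi 0)) (nhds (Sval E w x c)) := by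
    refine tendsto_const_nhds.congr' ?_
    filter_upwards [tvpart_stmt9 E w x c, self_mem_nhdsWithin] with t h1 h2
    rw [h1, ← mul_assoc, inv_mul_cancel₀ (ne_of_gt h2), one_mul]
  have hreal : Tendsto (fun t : ℝ => t⁻¹ * ((f (x + t • c) - f x) +
      ((∑ e ∈ E, w e * |(x + t • c) e.1 - (x + t • c) e.2|) -
       (∑ e ∈ E, w e * |x e.1 - x e.2|)))) (nhdsWithin 0 (Set.Ioi 0))
      (nhds (fderiv ℝ f x c + Sval E w x c)) :=
    ((fpart_stmt9 f hf x c).add htv).congr (fun t => (mul_add _ _ _).symm)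
  have hgv : ∀ v : V, Tendsto (fun t : ℝ =>
      ((t⁻¹:ℝ):EReal) * (g v (x v + t * c v) - g v (x v)))
      (nhdsWithin 0 (Set.Ioi 0)) (nhds (gd v (x v) (c v))) := by
    intro v
    have h := (hgd v (x v) (hgtop v) (c v)).1
    simpa [HasDirDeriv, smul_eq_mul] using h
  have hfinal := etendsto_add_stmt9 (a := ((fderiv ℝ f x c + Sval E w x c : ℝ) : EReal))
    (b := ∑ v : V, gd v (x v) (c v)) (EReal.coe_ne_bot _)
    (esum_ne_bot_stmt9 _ _ fun v _ => (hgd v (x v) (hgtop v) (c v)).2)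
    (EReal.tendsto_coe.2 hreal)
    (etendsto_sum_stmt9 univ _ _ (fun v _ => (hgd v (x v) (hgtop v) (c v)).2)
      (fun v _ => hgv v))
  exact hfinal.congr' (Filter.EventuallyEq.symm key)

lemma gd_zero_stmt9 (g : ℝ → EReal) (gd0 : EReal) (y : ℝ) (hb : g y ≠ ⊥) (ht : g y ≠ ⊤)
    (h : Tendsto (fun t : ℝ => ((t⁻¹:ℝ):EReal) * (g (y + t • (0:ℝ)) - g y))
      (nhdsWithin 0 (Set.Ioi 0)) (nhds gd0)) : gd0 = 0 := by
  have heq : (fun t : ℝ => ((t⁻¹:ℝ):EReal) * (g (y + t • (0:ℝ)) - g y)) = fun _ => (0:EReal) := by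
    funext t
    rw [smul_zero, add_zero]
    have h0 : g y - g y = 0 := by
      lift g y to ℝ using ⟨ht, hb⟩ with r
      rw [← EReal.coe_sub]
      norm_num
    rw [h0, mul_zero]
  rw [heq] at h
  exact tendsto_nhds_unique h tendsto_const_nhds

end AuxStmt9

theorem stmt_9 (E : Finset (V × V)) (w : V × V → ℝ) (hw : ∀ e ∈ E, 0 ≤ w e)
    (f : (V → ℝ) → ℝ) (hf : Differentiable ℝ f)
    (g : V → ℝ → EReal) (hgbot : ∀ v y, g v y ≠ ⊥)
    (gd : V → ℝ → ℝ → EReal)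
    (hgd : ∀ v y, g v y ≠ ⊤ → ∀ dir : ℝ,
      HasDirDeriv (g v) y dir (gd v y dir) ∧ gd v y dir ≠ ⊥)
    (x : V → ℝ) (hx : objF E w f g x ≠ ⊤) (d : V → ℝ)
    (Lm Lp : EReal)
    (hLm : HasDirDeriv (objF E w f g) x (fun v => min (d v) 0) Lm)
    (hLp : HasDirDeriv (objF E w f g) x (fun v => max (d v) 0) Lp) :
    HasDirDeriv (objF E w f g) x d (Lm + Lp) := by
  classical
  -- each g v (x v) is finite
  have hgtop : ∀ v, g v (x v) ≠ ⊤ := by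
    intro v hvtop
    apply hx
    have hsum : ∑ v : V, g v (x v) = ⊤ := by
      rw [← Finset.add_sum_erase _ _ (Finset.mem_univ v), hvtop,
        EReal.top_add_of_ne_bot (esum_ne_bot_stmt9 _ _ fun j _ => hgbot j (x j))]
    rw [objF, hsum, EReal.add_top_of_ne_bot (EReal.coe_ne_bot _),
      EReal.top_add_of_ne_bot (EReal.coe_ne_bot _)]
  set dm : V → ℝ := fun v => min (d v) 0 with hdm
  set dp : V → ℝ := fun v => max (d v) 0 with hdp
  have hm := mainLim_stmt9 E w f hf g hgbot gd hgd x hgtop dm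
  have hp := mainLim_stmt9 E w f hf g hgbot gd hgd x hgtop dp
  have hLm' : Lm = Lval E w f gd x dm := tendsto_nhds_unique hLm hm
  have hLp' : Lp = Lval E w f gd x dp := tendsto_nhds_unique hLp hp
  -- gd at direction 0 is 0
  have hgd0 : ∀ v, gd v (x v) 0 = 0 := fun v =>
    gd_zero_stmt9 (g v) (gd v (x v) 0) (x v) (hgbot v (x v)) (hgtop v)
      ((hgd v (x v) (hgtop v) 0).1)
  -- additivity of Lval
  have hdsum : d = dm + dp := by
    funext v
    have := min_add_max (d v) (0:ℝ)
    simp only [hdm, hdp, Pi.add_apply]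
    linarith
  have hfd : fderiv ℝ f x d = fderiv ℝ f x dm + fderiv ℝ f x dp := by
    conv_lhs => rw [hdsum]
    exact (fderiv ℝ f x).map_add dm dp
  have hS : Sval E w x d = Sval E w x dm + Sval E w x dp := by
    rw [Sval, Sval, Sval, ← Finset.sum_add_distrib]
    refine Finset.sum_congr rfl fun e he => ?_
    by_cases hxe : x e.1 = x e.2
    · simp only [if_pos hxe]
      rw [← mul_add, key_abs_stmt9 (d e.1) (d e.2)]
    · simp only [if_neg hxe]
      have h1 : d e.1 = dm e.1 + dp e.1 := by rw [hdsum]; simp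
      have h2 : d e.2 = dm e.2 + dp e.2 := by rw [hdsum]; simp
      rw [h1, h2]; ring
  have hgdsplit : ∀ v : V, gd v (x v) (d v) = gd v (x v) (dm v) + gd v (x v) (dp v) := by
    intro v
    rcases le_total (d v) 0 with h | h
    · have e1 : dm v = d v := min_eq_left h
      have e2 : dp v = 0 := max_eq_right h
      rw [e1, e2, hgd0 v, add_zero]
    · have e1 : dm v = 0 := min_eq_right h
      have e2 : dp v = d v := max_eq_left h
      rw [e1, e2, hgd0 v, zero_add]
  have hLadd : Lval E w f gd x dm + Lval E w f gd x dp = Lval E w f gd x d := by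
    rw [Lval, Lval, Lval, hfd, hS]
    have hsplit : ∑ v : V, gd v (x v) (d v)
        = (∑ v : V, gd v (x v) (dm v)) + ∑ v : V, gd v (x v) (dp v) := by
      rw [← Finset.sum_add_distrib]
      exact Finset.sum_congr rfl fun v _ => hgdsplit v
    rw [hsplit]
    have hc : ((fderiv ℝ f x dm + fderiv ℝ f x dp + (Sval E w x dm + Sval E w x dp) : ℝ) : EReal)
        = ((fderiv ℝ f x dm + Sval E w x dm : ℝ) : EReal)
          + ((fderiv ℝ f x dp + Sval E w x dp : ℝ) : EReal) := by
      rw [← EReal.coe_add]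
      norm_cast
      ring
    rw [hc]
    abel
  rw [hLm', hLp', hLadd]
  exact mainLim_stmt9 E w f hf g hgbot gd hgd x hgtop d
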